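/- (Bohr's inequality as a special case.) Let p > 1 and let s, t be real numbers with 1 < s ≤ 2 and 1/s + 1/t = 1. Then for all nonnegative real numbers x and y, s·x^p + t·y^p ≥ ((s−1)·x + y)^p / ((s−1)·s^{p−2}) ≥ ((s−1)·x + y)^p / 2^{p−2}. -/

import Mathlib

/-- Bohr's inequality as a special case of Theorem 1. -/
theorem bohr_inequality (p s t : ℝ) (hp : 1 < p) (hs : 1 < s) (hs2 : s ≤ 2)
    (hst : 1 / s + 1 / t = 1) (x y : ℝ) (hx : 0 ≤ x) (hy : 0 ≤ y) :
    s * x ^ p + t * y ^ p ≥ ((s - 1) * x + y) ^ p / ((s - 1) * s ^ (p - 2)) ∧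
    ((s - 1) * x + y) ^ p / ((s - 1) * s ^ (p - 2)) ≥ ((s - 1) * x + y) ^ p / 2 ^ (p - 2) := by
  have hs0 : (0:ℝ) < s := by linarith
  have hs1 : (0:ℝ) < s - 1 := by linarith
  have hsp : (0:ℝ) < s ^ (p - 2) := Real.rpow_pos_of_pos hs0 _
  have h2p : (0:ℝ) < (2:ℝ) ^ (p - 2) := Real.rpow_pos_of_pos (by norm_num) _
  have ht : t = s / (s - 1) := by
    have ht0 : t ≠ 0 := by
      intro h; rw [h] at hst; simp at hst
      have : (1:ℝ)/s < 1 := by rw [div_lt_one hs0]; linarith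
      linarith
    field_simp at hst ⊢
    nlinarith [hst]
  have hA : (0:ℝ) ≤ ((s - 1) * x + y) ^ p :=
    Real.rpow_nonneg (by nlinarith) _
  have hcle : (s - 1) * s ^ (p - 2) ≤ 2 ^ (p - 2) := by
    have h2s : (1:ℝ) ≤ 2 / s := by rw [le_div_iff₀ hs0]; linarith
    have hmono : (2 / s) ^ (-1 : ℝ) ≤ (2 / s) ^ (p - 2) :=
      Real.rpow_le_rpow_of_exponent_le h2s (by linarith)
    have hinv : (2 / s) ^ (-1 : ℝ) = s / 2 := by
      rw [Real.rpow_neg_one]; field_simp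
    have key : s - 1 ≤ (2 / s) ^ (p - 2) := by
      rw [hinv] at hmono; linarith
    have : (2:ℝ) ^ (p - 2) = (2 / s) ^ (p - 2) * s ^ (p - 2) := by
      rw [← Real.mul_rpow (by positivity) hs0.le]
      congr 1; field_simp
    rw [this]
    exact mul_le_mul_of_nonneg_right key hsp.le
  constructor
  · -- main inequality
    rw [ge_iff_le, div_le_iff₀ (by positivity)]
    -- convexity: ((s-1)/s * x + 1/s * y)^p ≤ (s-1)/s * x^p + 1/s * y^p
    have hconv := (convexOn_rpow hp.le).2 (Set.mem_Ici.2 hx) (Set.mem_Ici.2 hy)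
      (by positivity : (0:ℝ) ≤ (s-1)/s) (by positivity : (0:ℝ) ≤ 1/s)
      (by field_simp; ring)
    simp only [smul_eq_mul] at hconv
    have hrw : (s - 1) * x + y = s * ((s-1)/s * x + 1/s * y) := by
      field_simp
    have hsplit : ((s - 1) * x + y) ^ p
        ≤ s ^ p * ((s-1)/s * x ^ p + 1/s * y ^ p) := by
      rw [hrw, Real.mul_rpow hs0.le (by positivity)]
      exact mul_le_mul_of_nonneg_left hconv (Real.rpow_nonneg hs0.le _)
    refine hsplit.trans (le_of_eq ?_)
    have e1 : s ^ p = s ^ (p - 2) * s ^ (2:ℝ) := by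
      rw [← Real.rpow_add hs0]; ring_nf
    have e2 : s ^ (2:ℝ) = s * s := by
      rw [show (2:ℝ) = ((2:ℕ):ℝ) by norm_num, Real.rpow_natCast]; ring
    rw [ht, e1, e2]
    field_simp
  · rw [ge_iff_le]
    exact div_le_div_of_nonneg_left hA (by positivity) hcle
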